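/- If (α₁,…,α_N) is a generalized Nash equilibrium of the unnormalized game (each αᵢ minimizes ∑_a ℓᵢ(a) ∏ⱼ αⱼ(a) over nonnegative αᵢ subject to ∑_a ∏ⱼ αⱼ(a) = 1), and every αᵢ is strictly positive, then for each player i the cost ℓᵢ is constant on the joint action space: ℓᵢ(aᵢ, a₋ᵢ) = ℓᵢ(âᵢ, a₋ᵢ) for all aᵢ, âᵢ, a₋ᵢ. -/

import Mathlib

/-- If `(α₁,…,α_N)` is a strictly positive generalized Nash equilibrium of the
unnormalized game, then each player's cost is constant in its own action. -/
theorem gne_positive_implies_cost_constant {N : ℕ} {A : Fin N → Type*}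
    [∀ i, Fintype (A i)]
    (ℓ : ∀ _ : Fin N, (∀ j, A j) → ℝ)
    (α : ∀ _ : Fin N, (∀ j, A j) → ℝ)
    (hpos : ∀ i a, 0 < α i a)
    (hfeas : ∑ a, ∏ j, α j a = 1)
    (hgne : ∀ i, ∀ α' : (∀ j, A j) → ℝ, (∀ a, 0 ≤ α' a) →
        (∑ a, α' a * ∏ j ∈ Finset.univ.erase i, α j a = 1) →
        ∑ a, ℓ i a * (α i a * ∏ j ∈ Finset.univ.erase i, α j a)
          ≤ ∑ a, ℓ i a * (α' a * ∏ j ∈ Finset.univ.erase i, α j a)) :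
    ∀ i (a : ∀ j, A j) (b : A i), ℓ i a = ℓ i (Function.update a i b) := by
  intro i a b
  classical
  set β : (∀ j, A j) → ℝ := fun x => ∏ j ∈ Finset.univ.erase i, α j x with hβ
  have hβpos : ∀ x, 0 < β x := fun x => Finset.prod_pos (fun j _ => hpos j x)
  have hw : ∀ x, α i x * β x = ∏ j, α j x := fun x =>
    Finset.mul_prod_erase Finset.univ (fun j => α j x) (Finset.mem_univ i)
  set c := ∑ x, ℓ i x * (α i x * β x) with hc
  have key : ∀ x₀, c ≤ ℓ i x₀ := by
    intro x₀
    have hne : β x₀ ≠ 0 := (hβpos x₀).ne'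
    have h := hgne i (fun x => if x = x₀ then 1 / β x₀ else 0)
      (fun x => by
        split
        · exact div_nonneg zero_le_one (hβpos x₀).le
        · exact le_refl 0)
      (by
        simp only [ite_mul, zero_mul, Finset.sum_ite_eq', Finset.mem_univ, if_true]
        field_simp
        rfl)
    have h' : ∏ j ∈ Finset.univ.erase i, α j x₀ = β x₀ := rfl
    simpa [mul_ite, ite_mul, zero_mul, mul_zero, Finset.sum_ite_eq', hne,
      mul_div_assoc, div_self, h', inv_mul_cancel₀ hne] using h
  have hsumw : ∑ x, α i x * β x = 1 := by simp_rw [hw]; exact hfeas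
  have hall : ∀ x, ℓ i x = c := by
    intro x
    by_contra hne
    have hlt : c < ℓ i x := lt_of_le_of_ne (key x) (fun h => hne h.symm)
    have : c < c := by
      calc c = ∑ y, c * (α i y * β y) := by
              rw [← Finset.mul_sum, hsumw, mul_one]
        _ < ∑ y, ℓ i y * (α i y * β y) := by
              apply Finset.sum_lt_sum
              · intro y _
                exact mul_le_mul_of_nonneg_right (key y)
                  (le_of_lt (mul_pos (hpos i y) (hβpos y)))
              · exact ⟨x, Finset.mem_univ x,
                  mul_lt_mul_of_pos_right hlt (mul_pos (hpos i x) (hβpos x))⟩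
        _ = c := hc.symm
    exact lt_irrefl _ this
  rw [hall a, hall (Function.update a i b)]
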